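/- Let x1, x2 be distinct nonzero complex numbers, G1 = diag(x1, x2), and G2 = (1/(x1-x2)) * [[-x2^2, -x1 x2],[x1^2 - x1 x2 + x2^2, x1^2]]. Then (G1 G2)^3 = -(x1 x2)^3 · I. -/

import Mathlib

open Matrix

theorem rep_dim2_central (x1 x2 : ℂ) (h1 : x1 ≠ 0) (h2 : x2 ≠ 0) (h12 : x1 ≠ x2) :
    let G1 : Matrix (Fin 2) (Fin 2) ℂ := !![x1, 0; 0, x2]
    let G2 : Matrix (Fin 2) (Fin 2) ℂ :=
      (x1 - x2)⁻¹ • !![-x2 ^ 2, -(x1 * x2); x1 ^ 2 - x1 * x2 + x2 ^ 2, x1 ^ 2]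
    (G1 * G2) ^ 3 = (-(x1 * x2) ^ 3) • (1 : Matrix (Fin 2) (Fin 2) ℂ) := by
  intro G1 G2
  have hd : x1 - x2 ≠ 0 := sub_ne_zero.mpr h12
  rw [pow_succ, pow_succ, pow_one]
  simp only [G1, G2, Matrix.mul_smul, Matrix.smul_mul, mul_one, smul_smul]
  ext i j
  fin_cases i <;> fin_cases j <;>
    simp [Matrix.mul_apply, Fin.sum_univ_succ, Matrix.one_apply] <;>
    (first | (field_simp; ring) | (field_simp; exact Or.inr (by ring)) | exact Or.inr (by ring)) <;>
    simp
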